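/- Let M be a model with borders on n variables, let w ∈ M be a separated point, and let φ be a (∧,→)-formula over the n variables. Then M, w ⊨ φ if and only if M^s, w ⊨ φ, where M^s, w ⊨ φ denotes satisfaction in the submodel of separated points. -/
import Mathlib


/-- `(∧,→)`-formulas over `n` propositional variables. -/
inductive MeetImpForm (n : ℕ) : Type
  | var (i : Fin n) : MeetImpForm n
  | and (φ ψ : MeetImpForm n) : MeetImpForm n
  | imp (φ ψ : MeetImpForm n) : MeetImpForm n

/-- Kripke satisfaction of a `(∧,→)`-formula in a model given by a poset `M` with
colouring `c : M → Fin n → Bool`. -/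
def MeetImpSat {n : ℕ} {M : Type*} [PartialOrder M] (c : M → Fin n → Bool) :
    MeetImpForm n → M → Prop
  | .var i, x => c x i = true
  | .and φ ψ, x => MeetImpSat c φ x ∧ MeetImpSat c ψ x
  | .imp φ ψ, x => ∀ y : M, x ≤ y → MeetImpSat c φ y → MeetImpSat c ψ y

/-- A point `x` of a model is separated if it is a `p_i`-border point for some
variable `p_i`. -/
def SeparatedPt {n : ℕ} {M : Type*} [PartialOrder M] (c : M → Fin n → Bool) (x : M) : Prop :=
  ∃ i : Fin n, c x i = false ∧ ∀ z : M, x < z → c z i = true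


theorem meetImpSat_mono {n : ℕ} {M : Type*} [PartialOrder M] (c : M → Fin n → Bool)
    (hc : Monotone c) (φ : MeetImpForm n) :
    ∀ {x y : M}, x ≤ y → MeetImpSat c φ x → MeetImpSat c φ y := by
  induction φ with
  | var i =>
    intro x y hxy h
    have := hc hxy i
    simp only [MeetImpSat] at h ⊢
    rw [h] at this
    exact top_le_iff.mp this
  | and φ ψ ihφ ihψ =>
    intro x y hxy h
    exact ⟨ihφ hxy h.1, ihψ hxy h.2⟩
  | imp φ ψ ihφ ihψ =>
    intro x y hxy h z hyz hz
    exact h z (hxy.trans hyz) hz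

theorem meetImpSat_refute_sep {n : ℕ} {M : Type*} [PartialOrder M] (c : M → Fin n → Bool)
    (hc : Monotone c)
    (hborders : ∀ (x : M) (i : Fin n), c x i = false →
      ∃ u : M, x ≤ u ∧ c u i = false ∧ ∀ z : M, u < z → c z i = true)
    (φ : MeetImpForm n) :
    ∀ y : M, ¬ MeetImpSat c φ y →
      ∃ u : M, y ≤ u ∧ SeparatedPt c u ∧ ¬ MeetImpSat c φ u := by
  induction φ with
  | var i =>
    intro y h
    simp only [MeetImpSat] at h
    have hf : c y i = false := by
      cases hcy : c y i
      · rfl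
      · exact absurd hcy h
    obtain ⟨u, hyu, huf, hub⟩ := hborders y i hf
    exact ⟨u, hyu, ⟨i, huf, hub⟩, by simp [MeetImpSat, huf]⟩
  | and φ ψ ihφ ihψ =>
    intro y h
    by_cases hφ : MeetImpSat c φ y
    · have hψ : ¬ MeetImpSat c ψ y := fun hψ => h ⟨hφ, hψ⟩
      obtain ⟨u, hyu, hsep, hnot⟩ := ihψ y hψ
      exact ⟨u, hyu, hsep, fun h' => hnot h'.2⟩
    · obtain ⟨u, hyu, hsep, hnot⟩ := ihφ y hφ
      exact ⟨u, hyu, hsep, fun h' => hnot h'.1⟩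
  | imp φ ψ ihφ ihψ =>
    intro y h
    simp only [MeetImpSat] at h
    push_neg at h
    obtain ⟨z, hyz, hzφ, hzψ⟩ := h
    obtain ⟨u, hzu, hsep, hnot⟩ := ihψ z hzψ
    refine ⟨u, hyz.trans hzu, hsep, fun h' => ?_⟩
    exact hnot (h' u le_rfl (meetImpSat_mono c hc φ hzu hzφ))

/-- In a model with borders `M`, a separated point `w` satisfies a `(∧,→)`-formula
`φ` in `M` if and only if it satisfies `φ` in the submodel `M^s` of separated points
(with the restricted order and colouring). -/
theorem meetImpSat_iff_meetImpSat_sep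
    {n : ℕ} {M : Type*} [PartialOrder M] (c : M → Fin n → Bool) (hc : Monotone c)
    (hborders : ∀ (x : M) (i : Fin n), c x i = false →
      ∃ u : M, x ≤ u ∧ c u i = false ∧ ∀ z : M, u < z → c z i = true)
    (w : M) (hw : SeparatedPt c w) (φ : MeetImpForm n) :
    MeetImpSat c φ w ↔
      MeetImpSat (fun z : {z : M // SeparatedPt c z} => c (z : M)) φ ⟨w, hw⟩ := by
  induction φ generalizing w with
  | var i => simp [MeetImpSat]
  | and φ ψ ihφ ihψ =>
    exact and_congr (ihφ w hw) (ihψ w hw)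
  | imp φ ψ ihφ ihψ =>
    constructor
    · intro h ⟨y, hy⟩ hwy hyφ
      exact (ihψ y hy).mp (h y hwy ((ihφ y hy).mpr hyφ))
    · intro h y hwy hyφ
      by_contra hyψ
      obtain ⟨u, hyu, hsep, hnot⟩ := meetImpSat_refute_sep c hc hborders ψ y hyψ
      have huφ : MeetImpSat c φ u := meetImpSat_mono c hc φ hyu hyφ
      exact hnot ((ihψ u hsep).mpr
        (h ⟨u, hsep⟩ (hwy.trans hyu) ((ihφ u hsep).mp huφ)))
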